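/- For complex numbers v, φ, ψ, one has 2(v²ψφ̄ + v̄²ψ̄φ)(|ψ|² + |φ|²) + |v|²(|ψ|⁴ + |φ|⁴ + 6|φ|²|ψ|²) = ¼⟨Å(V), Å(V)⟩, where Å(V) = ¼(⟨B(e,e),V⟩B(ē,ē) + ⟨B(ē,ē),V⟩B(e,e)) with V = (v n̄ + v̄ n)/2, B(e,e) = 2ψ̄ n̄ + 2φ̄ n, and the bilinear product on the complexified normal bundle satisfies ⟨n,n⟩ = ⟨n̄,n̄⟩ = 0, ⟨n,n̄⟩ = 2. Here the left side is understood as a real number (it is real since the first sum is twice a real part). -/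

import Mathlib

open Complex

noncomputable section

/-- The complex bilinear inner product on `span_ℂ{n̄, n}` (pairs `(x,y) ↔ x n̄ + y n`),
with `⟨n,n⟩ = ⟨n̄,n̄⟩ = 0`, `⟨n,n̄⟩ = 2`. -/
def nbil (v w : ℂ × ℂ) : ℂ := 2 * (v.1 * w.2 + v.2 * w.1)

/-- Identity (eq-2cav) from the simplification of the second variation of the Willmore
functional: for complex numbers `v, φ, ψ`, with `V = (v n̄ + v̄ n)/2`,
`B(e,e) = 2ψ̄ n̄ + 2φ̄ n`, `B(ē,ē) = 2φ n̄ + 2ψ n` and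
`Å(V) = ¼(⟨B(e,e),V⟩B(ē,ē) + ⟨B(ē,ē),V⟩B(e,e))`,
`2(v²ψφ̄ + v̄²ψ̄φ)(|ψ|² + |φ|²) + |v|²(|ψ|⁴ + |φ|⁴ + 6|φ|²|ψ|²) = ¼⟨Å(V), Å(V)⟩`. -/
theorem stmt_13 (v φ ψ : ℂ) :
    let V : ℂ × ℂ := (v / 2, (starRingEnd ℂ) v / 2)
    let Bee : ℂ × ℂ := (2 * (starRingEnd ℂ) ψ, 2 * (starRingEnd ℂ) φ)
    let Bbb : ℂ × ℂ := (2 * φ, 2 * ψ)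
    let Acal : ℂ × ℂ := (1 / 4 : ℂ) • (nbil Bee V • Bbb + nbil Bbb V • Bee)
    2 * (v ^ 2 * ψ * (starRingEnd ℂ) φ + ((starRingEnd ℂ) v) ^ 2 * (starRingEnd ℂ) ψ * φ)
        * (((‖ψ‖ : ℝ) : ℂ) ^ 2 + ((‖φ‖ : ℝ) : ℂ) ^ 2)
      + ((‖v‖ : ℝ) : ℂ) ^ 2
        * (((‖ψ‖ : ℝ) : ℂ) ^ 4 + ((‖φ‖ : ℝ) : ℂ) ^ 4
            + 6 * ((‖φ‖ : ℝ) : ℂ) ^ 2 * ((‖ψ‖ : ℝ) : ℂ) ^ 2)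
      = (1 / 4 : ℂ) * nbil Acal Acal := by
  intro V Bee Bbb Acal
  have h : ∀ z : ℂ, ((‖z‖ : ℝ) : ℂ) ^ 2 = z * (starRingEnd ℂ) z := by
    intro z
    rw [← Complex.ofReal_pow, Complex.sq_norm]
    exact (Complex.mul_conj z).symm
  have h4 : ∀ z : ℂ, ((‖z‖ : ℝ) : ℂ) ^ 4 = (z * (starRingEnd ℂ) z) ^ 2 := by
    intro z; rw [show (4:ℕ)=2*2 from rfl, pow_mul, h]
  simp only [V, Bee, Bbb, Acal, nbil, h, h4, Prod.smul_fst, Prod.smul_snd, Prod.fst_add,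
    Prod.snd_add, smul_eq_mul]
  ring

end
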